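/- Let F : ℝ⁵ → ℝ³ be F(p) = (H(p), I(p), C(p)), and for p ∈ ℝ⁵ let ∇F(p) denote the 3×5 matrix whose rows are ∇H(p), ∇I(p), ∇C(p). Then rank ∇F(p) = 2 if and only if p ∈ M₁ ∪ M₂, where M₁ = {(x₁, y₁, x₂, −x₁y₁/x₂, −y₁²/x₂²) : x₁,y₁ ∈ ℝ, x₂ ≠ 0} and M₂ = {(x₁, 0, 0, y₂, −y₂²/x₁²) : y₂ ∈ ℝ, x₁ ≠ 0}. -/

import Mathlib

open Matrix

lemma rank_le_two_iff (A : Matrix (Fin 3) (Fin 5) ℝ) :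
    A.rank ≤ 2 ↔ ¬ LinearIndependent ℝ A := by
  have hle : A.rank ≤ 3 := by simpa using A.rank_le_card_height
  have h3 : LinearIndependent ℝ A ↔ A.rank = 3 := by
    refine linearIndependent_iff_card_eq_finrank_span.trans ?_
    rw [A.rank_eq_finrank_span_row]
    simp [Set.finrank, eq_comm]
    exact Iff.rfl
  constructor
  · intro h hind
    have := h3.mp hind; omega
  · intro h
    have : A.rank ≠ 3 := fun e => h (h3.mpr e)
    omega

lemma two_le_rank (A : Matrix (Fin 3) (Fin 5) ℝ)
    (h : LinearIndependent ℝ ![A 1, A 2]) : 2 ≤ A.rank := by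
  rw [A.rank_eq_finrank_span_row]
  have h2 : Module.finrank ℝ (Submodule.span ℝ (Set.range ![A 1, A 2])) = 2 := by
    have := linearIndependent_iff_card_eq_finrank_span.mp h
    simpa [Set.finrank] using this.symm
  rw [← h2]
  apply Submodule.finrank_mono
  apply Submodule.span_mono
  rintro _ ⟨i, rfl⟩
  fin_cases i <;> exact ⟨_, rfl⟩

lemma rank_ne_two_degenerate (z : ℝ) :
    (!![0, 0, 0, 0, z; 0, 0, 0, 0, 0; (0:ℝ), 0, 0, 0, 1] : Matrix (Fin 3) (Fin 5) ℝ).rank ≠ 2 := by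
  set A : Matrix (Fin 3) (Fin 5) ℝ := !![0, 0, 0, 0, z; 0, 0, 0, 0, 0; (0:ℝ), 0, 0, 0, 1]
  have h1 : A.rank ≤ 1 := by
    rw [A.rank_eq_finrank_span_row]
    have hv : (![0,0,0,0,1] : Fin 5 → ℝ) ≠ 0 := by
      intro h; have := congrFun h 4; simp at this
    calc Module.finrank ℝ (Submodule.span ℝ (Set.range A))
        ≤ Module.finrank ℝ (Submodule.span ℝ ({![0,0,0,0,1]} : Set (Fin 5 → ℝ))) := by
          apply Submodule.finrank_mono
          apply Submodule.span_le.mpr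
          rintro _ ⟨i, rfl⟩
          fin_cases i <;> simp only [Fin.isValue, Fin.mk_one, Fin.mk_zero]
          · have : A 0 = z • ![0,0,0,0,1] := by
              funext j; fin_cases j <;> simp [A]
            show A 0 ∈ _; rw [this]
            exact Submodule.smul_mem _ _ (Submodule.subset_span rfl)
          · have : A 1 = 0 := by funext j; fin_cases j <;> simp [A]
            show A 1 ∈ _; rw [this]; exact Submodule.zero_mem _
          · show A 2 ∈ _; exact Submodule.subset_span rfl
      _ = 1 := finrank_span_singleton hv
  omega
/-- For `F = (H, I, C) : ℝ⁵ → ℝ³`, the gradient matrix `∇F(p)` (rows `∇H(p)`, `∇I(p)`,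
`∇C(p)`) has rank 2 exactly on the set `M₁ ∪ M₂`, where
`M₁ = {(x₁, y₁, x₂, −x₁y₁/x₂, −y₁²/x₂²) : x₂ ≠ 0}` and
`M₂ = {(x₁, 0, 0, y₂, −y₂²/x₁²) : x₁ ≠ 0}`. -/
theorem rank_two_invariant_set (x1 y1 x2 y2 z : ℝ) :
    (!![0, y1, 0, y2, z;
        -y2, x2, y1, -x1, 0;
        x1, 0, x2, 0, 1] : Matrix (Fin 3) (Fin 5) ℝ).rank = 2 ↔
    ((x2 ≠ 0 ∧ y2 = -(x1 * y1) / x2 ∧ z = -y1 ^ 2 / x2 ^ 2) ∨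
     (x1 ≠ 0 ∧ y1 = 0 ∧ x2 = 0 ∧ z = -y2 ^ 2 / x1 ^ 2)) := by
  set A : Matrix (Fin 3) (Fin 5) ℝ :=
    !![0, y1, 0, y2, z; -y2, x2, y1, -x1, 0; x1, 0, x2, 0, 1] with hA
  constructor
  · intro h
    have hle : ¬ LinearIndependent ℝ A := (rank_le_two_iff A).mp h.le
    obtain ⟨g, hsum, i, hi⟩ := Fintype.not_linearIndependent_iff.mp hle
    have e0 := congrFun hsum 0
    have e1 := congrFun hsum 1
    have e2 := congrFun hsum 2
    have e3 := congrFun hsum 3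
    have e4 := congrFun hsum 4
    simp [Fin.sum_univ_three, hA] at e0 e1 e2 e3 e4
    by_cases hg0 : g 0 = 0
    · -- degenerate: all of x1,x2,y1,y2 vanish, contradiction with rank = 2
      have hg2 : g 2 = 0 := by rw [hg0] at e4; linarith
      have hg1 : g 1 ≠ 0 := by
        fin_cases i
        · exact absurd hg0 hi
        · exact hi
        · exact absurd hg2 hi
      have hy2 : y2 = 0 := by
        have := mul_eq_zero.mp (by linear_combination -e0 + x1 * hg2 : g 1 * y2 = 0)
        tauto
      have hx2 : x2 = 0 := by
        have := mul_eq_zero.mp (by linear_combination e1 - y1 * hg0 : g 1 * x2 = 0)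
        tauto
      have hy1 : y1 = 0 := by
        have := mul_eq_zero.mp (by linear_combination e2 - x2 * hg2 : g 1 * y1 = 0)
        tauto
      have hx1 : x1 = 0 := by
        have := mul_eq_zero.mp (by linear_combination -e3 + y2 * hg0 : g 1 * x1 = 0)
        tauto
      exfalso
      rw [hA, hy2, hx2, hy1, hx1] at h
      simp only [neg_zero] at h
      exact rank_ne_two_degenerate z h
    · by_cases hx2 : x2 = 0
      · subst hx2
        have hy1 : y1 = 0 := by
          have := mul_eq_zero.mp (by linear_combination e1 : g 0 * y1 = 0)
          tauto
        by_cases hx1 : x1 = 0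
        · subst hx1
          have hy2 : y2 = 0 := by
            have := mul_eq_zero.mp (by linear_combination e3 : g 0 * y2 = 0)
            tauto
          exfalso
          rw [hA, hy1, hy2] at h
          simp only [neg_zero] at h
          exact rank_ne_two_degenerate z h
        · refine Or.inr ⟨hx1, hy1, rfl, ?_⟩
          have key : g 0 * (z * x1 ^ 2 + y2 ^ 2) = 0 := by
            linear_combination x1 ^ 2 * e4 - x1 * e0 + y2 * e3
          have h2 : z * x1 ^ 2 + y2 ^ 2 = 0 :=
            (mul_eq_zero.mp key).resolve_left hg0
          field_simp
          linarith
      · refine Or.inl ⟨hx2, ?_, ?_⟩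
        · have key : g 0 * (y2 * x2 + x1 * y1) = 0 := by
            linear_combination x2 * e3 + x1 * e1
          have h2 : y2 * x2 + x1 * y1 = 0 :=
            (mul_eq_zero.mp key).resolve_left hg0
          field_simp
          linarith
        · have key : g 0 * (z * x2 ^ 2 + y1 ^ 2) = 0 := by
            linear_combination x2 ^ 2 * e4 - x2 * e2 + y1 * e1
          have h2 : z * x2 ^ 2 + y1 ^ 2 = 0 :=
            (mul_eq_zero.mp key).resolve_left hg0
          field_simp
          linarith
  · rintro (⟨hx2, hy2, hz⟩ | ⟨hx1, hy1, hx2, hz⟩)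
    · refine le_antisymm ?_ ?_
      · apply (rank_le_two_iff A).mpr
        refine Fintype.not_linearIndependent_iff.mpr ?_
        refine ⟨![1, -(y1 / x2), -z], ?_, 0, by norm_num⟩
        funext j
        simp only [Fin.sum_univ_three, hA]
        fin_cases j <;>
          simp <;> subst hy2 hz <;> field_simp <;> ring
      · apply two_le_rank
        rw [LinearIndependent.pair_iff]
        intro s t hst
        have c4 := congrFun hst 4
        have c1 := congrFun hst 1
        simp [hA] at c4 c1
        exact ⟨c1.resolve_right hx2, c4⟩
    · refine le_antisymm ?_ ?_
      · apply (rank_le_two_iff A).mpr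
        refine Fintype.not_linearIndependent_iff.mpr ?_
        refine ⟨![1, y2 / x1, -z], ?_, 0, by norm_num⟩
        funext j
        simp only [Fin.sum_univ_three, hA]
        fin_cases j <;>
          simp <;> subst hy1 hx2 hz <;> field_simp <;> ring
      · apply two_le_rank
        rw [LinearIndependent.pair_iff]
        intro s t hst
        have c4 := congrFun hst 4
        have c3 := congrFun hst 3
        simp [hA] at c4 c3
        exact ⟨c3.resolve_right hx1, c4⟩
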